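/- Every nontrivial monotone graph property on 5 vertices is evasive; that is, for every family Δ of simple graphs on Fin 5 that is closed under graph isomorphism and under deletion of edges, contains the edgeless graph, and does not contain the complete graph, the simplicial complex Δ (on the vertex set of unordered pairs of distinct elements of Fin 5) is not nonevasive. -/

import Mathlib

open SimpleGraph

/-- The edge set of a graph on a finite vertex type, as a `Finset`. -/
noncomputable def edgesOf {V : Type} [Fintype V] (G : SimpleGraph V) : Finset (Sym2 V) :=
  (Set.toFinite G.edgeSet).toFinset

/-- The link of a vertex in a simplicial complex. -/
def lk {V : Type} [DecidableEq V] (Δ : Set (Finset V)) (v : V) : Set (Finset V) :=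
  {σ | σ ∈ Δ ∧ v ∉ σ ∧ insert v σ ∈ Δ}

/-- The deletion of a vertex from a simplicial complex. -/
def dl {V : Type} (Δ : Set (Finset V)) (v : V) : Set (Finset V) :=
  {σ | σ ∈ Δ ∧ v ∉ σ}

/-- Nonevasiveness of a simplicial complex (given as its set of faces). -/
inductive Nonevasive {V : Type} [DecidableEq V] : Set (Finset V) → Prop
  | point (v : V) : Nonevasive {∅, {v}}
  | step (Δ : Set (Finset V)) (v : V) (hv : {v} ∈ Δ)
      (hlk : Nonevasive (lk Δ v)) (hdl : Nonevasive (dl Δ v)) : Nonevasive Δ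

/-- The simplicial complex (on the vertex set of unordered pairs) associated to a
family of graphs: each graph is identified with its edge set. -/
noncomputable def graphComplex {V : Type} [Fintype V] (Δ : Set (SimpleGraph V)) :
    Set (Finset (Sym2 V)) :=
  edgesOf '' Δ

/-! ### Auxiliary: Euler characteristic of a nonevasive complex -/

def DownClosed {V : Type} (Δ : Set (Finset V)) : Prop :=
  ∀ σ ∈ Δ, ∀ τ ⊆ σ, τ ∈ Δ

noncomputable def chi {V : Type} [Fintype V] [DecidableEq V] (Δ : Set (Finset V)) : ℤ :=
  ∑ σ ∈ (Set.toFinite Δ).toFinset, (-1 : ℤ) ^ σ.card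

lemma downClosed_lk {V : Type} [DecidableEq V] {Δ : Set (Finset V)} (h : DownClosed Δ) (v : V) :
    DownClosed (lk Δ v) := by
  rintro σ ⟨h1, h2, h3⟩ τ hτ
  exact ⟨h σ h1 τ hτ, fun hv => h2 (hτ hv),
    h (insert v σ) h3 (insert v τ) (Finset.insert_subset_insert v hτ)⟩

lemma downClosed_dl {V : Type} [DecidableEq V] {Δ : Set (Finset V)} (h : DownClosed Δ) (v : V) :
    DownClosed (dl Δ v) := by
  rintro σ ⟨h1, h2⟩ τ hτ
  exact ⟨h σ h1 τ hτ, fun hv => h2 (hτ hv)⟩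

lemma chi_eq_zero {V : Type} [Fintype V] [DecidableEq V] {Δ : Set (Finset V)}
    (h : Nonevasive Δ) : DownClosed Δ → chi Δ = 0 := by
  induction h with
  | point v =>
    intro _
    have hne : (∅ : Finset V) ≠ {v} := Ne.symm (Finset.singleton_ne_empty v)
    have : (Set.toFinite ({∅, {v}} : Set (Finset V))).toFinset = {∅, {v}} := by
      ext σ; simp
    rw [chi, this, Finset.sum_pair hne]
    simp
  | step Δ v hv hlk hdl ihlk ihdl =>
    intro hdc
    have key : chi Δ = chi (dl Δ v) - chi (lk Δ v) := by
      rw [chi, chi, chi]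
      have hsplit : (Set.toFinite Δ).toFinset =
          (Set.toFinite Δ).toFinset.filter (fun σ => v ∉ σ) ∪
          (Set.toFinite Δ).toFinset.filter (fun σ => v ∈ σ) := by
        rw [← Finset.filter_or]
        simp [em']
      rw [hsplit, Finset.sum_union]
      · have h1 : (Set.toFinite Δ).toFinset.filter (fun σ => v ∉ σ) =
            (Set.toFinite (dl Δ v)).toFinset := by
          ext σ; simp [dl]
        have h2 : ∑ σ ∈ (Set.toFinite Δ).toFinset.filter (fun σ => v ∈ σ), (-1:ℤ)^σ.card
            = ∑ σ ∈ (Set.toFinite (lk Δ v)).toFinset, -(-1:ℤ)^σ.card := by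
          apply Finset.sum_nbij' (fun σ => σ.erase v) (fun σ => insert v σ)
          · intro σ hσ
            simp only [Finset.mem_filter, Set.Finite.mem_toFinset] at hσ ⊢
            obtain ⟨hσΔ, hvσ⟩ := hσ
            refine ⟨hdc σ hσΔ _ (Finset.erase_subset v σ), Finset.notMem_erase v σ, ?_⟩
            rwa [Finset.insert_erase hvσ]
          · intro σ hσ
            simp only [Set.Finite.mem_toFinset, lk] at hσ
            simp only [Finset.mem_filter, Set.Finite.mem_toFinset]
            exact ⟨hσ.2.2, Finset.mem_insert_self v σ⟩
          · intro σ hσ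
            simp only [Finset.mem_filter, Set.Finite.mem_toFinset] at hσ
            exact Finset.insert_erase hσ.2
          · intro σ hσ
            simp only [Set.Finite.mem_toFinset, lk] at hσ
            exact Finset.erase_insert hσ.2.1
          · intro σ hσ
            simp only [Finset.mem_filter, Set.Finite.mem_toFinset] at hσ
            rw [Finset.card_erase_of_mem hσ.2]
            have : 1 ≤ σ.card := Finset.card_pos.2 ⟨v, hσ.2⟩
            have hc : (-1:ℤ)^σ.card = (-1:ℤ)^((σ.card - 1)+1) := by
              congr 1; omega
            rw [hc, pow_succ]
            ring
        rw [h1, h2, Finset.sum_neg_distrib]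
        ring
      · rw [Finset.disjoint_filter]
        tauto
    rw [key, ihlk (downClosed_lk hdc v), ihdl (downClosed_dl hdc v)]
    ring

/-! ### Auxiliary: sums over free orbits of an order-5 map are divisible by 5 -/

lemma iterate_ne_self {α : Type} (P : α → α)
    (h5 : ∀ x, P^[5] x = x) (a : α) (ha : P a ≠ a) :
    ∀ k, 1 ≤ k → k ≤ 4 → P^[k] a ≠ a := by
  intro k hk1 hk4 hka
  have hmul : ∀ m, P^[k * m] a = a := by
    intro m
    induction m with
    | zero => simp
    | succ m ih => rw [Nat.mul_succ, Function.iterate_add_apply, hka]; exact ih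
  have h5' : ∀ n, P^[5 * n] a = a := by
    intro n
    induction n with
    | zero => simp
    | succ n ih => rw [Nat.mul_succ, Function.iterate_add_apply, h5]; exact ih
  interval_cases k
  · exact ha hka
  · have := hmul 3
    rw [show 2 * 3 = 1 + 5 * 1 by norm_num, Function.iterate_add_apply, h5' 1] at this
    exact ha this
  · have := hmul 2
    rw [show 3 * 2 = 1 + 5 * 1 by norm_num, Function.iterate_add_apply, h5' 1] at this
    exact ha this
  · have := hmul 4
    rw [show 4 * 4 = 1 + 5 * 3 by norm_num, Function.iterate_add_apply, h5' 3] at this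
    exact ha this

lemma sum_orbits_dvd {α : Type} [DecidableEq α] (P : α → α) (hinj : Function.Injective P)
    (h5 : ∀ x, P^[5] x = x) (f : α → ℤ) (hf : ∀ x, f (P x) = f x) :
    ∀ (n : ℕ) (T : Finset α), T.card ≤ n → (∀ x ∈ T, P x ∈ T) → (∀ x ∈ T, P x ≠ x) →
    (5 : ℤ) ∣ ∑ x ∈ T, f x := by
  have hfk : ∀ (k : ℕ) (x : α), f (P^[k] x) = f x := by
    intro k
    induction k with
    | zero => simp
    | succ k ih => intro x; rw [Function.iterate_succ_apply', hf, ih]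
  intro n
  induction n with
  | zero =>
    intro T hT _ _
    have : T = ∅ := Finset.card_eq_zero.1 (Nat.le_zero.1 hT)
    simp [this]
  | succ n ih =>
    intro T hcard hcl hfree
    rcases Finset.eq_empty_or_nonempty T with rfl | ⟨a, ha⟩
    · simp
    · have hmemT : ∀ k, P^[k] a ∈ T := by
        intro k
        induction k with
        | zero => simpa
        | succ k ih2 => rw [Function.iterate_succ_apply']; exact hcl _ ih2
      set o : Finset α := (Finset.range 5).image (fun k => P^[k] a) with ho
      have hoT : o ⊆ T := by
        intro x hx
        simp only [ho, Finset.mem_image, Finset.mem_range] at hx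
        obtain ⟨k, _, rfl⟩ := hx
        exact hmemT k
      have hcard5 : o.card = 5 := by
        rw [ho, Finset.card_image_of_injOn, Finset.card_range]
        have key : ∀ i j, i < j → j < 5 → P^[i] a = P^[j] a → False := by
          intro i j hlt hj5 hij
          have hkey : P^[j - i] a = a := by
            apply Function.Injective.iterate hinj i
            rw [← Function.iterate_add_apply, show i + (j - i) = j by omega]
            exact hij.symm
          exact iterate_ne_self P h5 a (hfree a ha) (j - i) (by omega) (by omega) hkey
        intro i hi j hj hij
        simp only [Finset.mem_coe, Finset.mem_range] at hi hj
        rcases lt_trichotomy i j with h | h | h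
        · exact absurd hij (fun hh => key i j h hj hh)
        · exact h
        · exact absurd hij.symm (fun hh => key j i h hi hh)
      have hsum_o : ∑ x ∈ o, f x = 5 * f a := by
        have : ∀ x ∈ o, f x = f a := by
          intro x hx
          simp only [ho, Finset.mem_image, Finset.mem_range] at hx
          obtain ⟨k, _, rfl⟩ := hx
          exact hfk k a
        rw [Finset.sum_congr rfl this, Finset.sum_const, hcard5]
        push_cast
        ring
      have hsplit : ∑ x ∈ T, f x = ∑ x ∈ T \ o, f x + ∑ x ∈ o, f x :=
        (Finset.sum_sdiff hoT).symm
      have hrec : (5:ℤ) ∣ ∑ x ∈ T \ o, f x := by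
        apply ih
        · rw [Finset.card_sdiff_of_subset hoT, hcard5]
          omega
        · intro x hx
          rw [Finset.mem_sdiff] at hx ⊢
          refine ⟨hcl x hx.1, ?_⟩
          intro hPx
          apply hx.2
          simp only [ho, Finset.mem_image, Finset.mem_range] at hPx ⊢
          obtain ⟨k, hk, hkx⟩ := hPx
          rcases Nat.eq_zero_or_pos k with rfl | hk0
          · refine ⟨4, by omega, ?_⟩
            apply hinj
            have h1 : P (P^[4] a) = a := by
              rw [← Function.iterate_succ_apply' P 4 a]; exact h5 a
            rw [h1]
            simpa using hkx
          · refine ⟨k - 1, by omega, ?_⟩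
            apply hinj
            have h1 : P (P^[k-1] a) = P^[k] a := by
              rw [← Function.iterate_succ_apply' P (k-1) a]
              congr 1
              omega
            rw [h1, hkx]
        · intro x hx
          exact hfree x (Finset.mem_sdiff.1 hx).1
      rw [hsplit]
      exact dvd_add hrec ⟨f a, hsum_o⟩

/-! ### Auxiliary: edge finsets of graphs -/

lemma mem_edgesOf {V : Type} [Fintype V] {G : SimpleGraph V} {z : Sym2 V} :
    z ∈ edgesOf G ↔ z ∈ G.edgeSet := Set.Finite.mem_toFinset _

lemma edgesOf_bot {V : Type} [Fintype V] : edgesOf (⊥ : SimpleGraph V) = ∅ := by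
  ext z; simp [mem_edgesOf]

lemma edgesOf_nondiag {V : Type} [Fintype V] {G : SimpleGraph V} :
    ∀ z ∈ edgesOf G, ¬ z.IsDiag :=
  fun _ hz => G.not_isDiag_of_mem_edgeSet (mem_edgesOf.1 hz)

lemma edgesOf_map {V : Type} [Fintype V] [DecidableEq V] (G : SimpleGraph V) (d : V ≃ V) :
    edgesOf (SimpleGraph.map d.toEmbedding G) = (edgesOf G).image (Sym2.map d) := by
  ext z
  induction z using Sym2.ind with
  | _ u v =>
    simp only [mem_edgesOf, Finset.mem_image, SimpleGraph.mem_edgeSet, SimpleGraph.map_adj]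
    constructor
    · rintro ⟨a, b, hab, ha, hb⟩
      refine ⟨s(a,b), (G.mem_edgeSet).2 hab, ?_⟩
      rw [Sym2.map_pair_eq, show d a = u from ha, show d b = v from hb]
    · rintro ⟨w, hw, hwz⟩
      induction w using Sym2.ind with
      | _ a b =>
        rw [Sym2.map_pair_eq, Sym2.eq_iff] at hwz
        have hab : G.Adj a b := (G.mem_edgeSet).1 hw
        rcases hwz with ⟨ha, hb⟩ | ⟨ha, hb⟩
        · exact ⟨a, b, hab, ha, hb⟩
        · exact ⟨b, a, hab.symm, hb, ha⟩

section GC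

variable {Δ : Set (SimpleGraph (Fin 5))}

lemma gc_image_mem (hiso : ∀ G H : SimpleGraph (Fin 5), G ∈ Δ → Nonempty (G ≃g H) → H ∈ Δ)
    (d : Fin 5 ≃ Fin 5) {S : Finset (Sym2 (Fin 5))} (hS : S ∈ graphComplex Δ) :
    S.image (Sym2.map d) ∈ graphComplex Δ := by
  obtain ⟨G, hG, rfl⟩ := hS
  refine ⟨SimpleGraph.map d.toEmbedding G, hiso _ _ hG ⟨SimpleGraph.Iso.map d G⟩, ?_⟩
  exact edgesOf_map G d

lemma gc_downClosed (hmono : ∀ G H : SimpleGraph (Fin 5), G ∈ Δ → H ≤ G → H ∈ Δ) :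
    DownClosed (graphComplex Δ) := by
  rintro σ ⟨G, hG, rfl⟩ τ hτ
  classical
  set H : SimpleGraph (Fin 5) :=
    { Adj := fun a b => s(a,b) ∈ τ ∧ a ≠ b
      symm := by constructor; intro a b hab; rw [Sym2.eq_swap] at hab; exact ⟨hab.1, Ne.symm hab.2⟩
      loopless := by constructor; intro a ha; exact ha.2 rfl } with hH
  have hHG : H ≤ G := by
    intro a b hab
    exact (G.mem_edgeSet).1 (mem_edgesOf.1 (hτ hab.1))
  refine ⟨H, hmono G H hG hHG, ?_⟩
  ext z
  induction z using Sym2.ind with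
  | _ u v =>
    simp only [mem_edgesOf, SimpleGraph.mem_edgeSet]
    constructor
    · intro h; exact h.1
    · intro h
      refine ⟨h, ?_⟩
      intro huv
      subst huv
      exact edgesOf_nondiag _ (hτ h) (by simp)

end GC

/-! ### Auxiliary: the rotation action on `Sym2 (Fin 5)` -/

def rot : Fin 5 ≃ Fin 5 := Equiv.addRight 1
def dbl : Fin 5 ≃ Fin 5 := ⟨fun x => 2*x, fun x => 3*x, by decide, by decide⟩
def em5 : Sym2 (Fin 5) → Sym2 (Fin 5) := Sym2.map rot
def C1 : Finset (Sym2 (Fin 5)) := {s(0,1), s(1,2), s(2,3), s(3,4), s(4,0)}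
def C2 : Finset (Sym2 (Fin 5)) := {s(0,2), s(2,4), s(4,1), s(1,3), s(3,0)}

lemma keyC1 : ∀ z ∈ C1, s((0:Fin 5),(1:Fin 5)) ∈ (Finset.range 5).image (fun k => em5^[k] z) := by decide
lemma keyC2 : ∀ z ∈ C2, s((0:Fin 5),(2:Fin 5)) ∈ (Finset.range 5).image (fun k => em5^[k] z) := by decide
lemma keyC1' : ∀ z ∈ C1, z ∈ (Finset.range 5).image (fun k => em5^[k] s((0:Fin 5),(1:Fin 5))) := by decide
lemma keyC2' : ∀ z ∈ C2, z ∈ (Finset.range 5).image (fun k => em5^[k] s((0:Fin 5),(2:Fin 5))) := by decide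
lemma nondiag_mem : ∀ z : Sym2 (Fin 5), ¬z.IsDiag → z ∈ C1 ∪ C2 := by decide
lemma em5_inj : Function.Injective em5 := Sym2.map.injective rot.injective
lemma em5_five5 : ∀ z, em5 (em5 (em5 (em5 (em5 z)))) = z := by decide
lemma C1_fixed : C1.image em5 = C1 := by decide
lemma C2_fixed : C2.image em5 = C2 := by decide
lemma C1_card : C1.card = 5 := by decide
lemma C2_card : C2.card = 5 := by decide
lemma C1_ne_C2 : C1 ≠ C2 := by decide
lemma C1_ne_empty : C1 ≠ ∅ := by decide
lemma C2_ne_empty : C2 ≠ ∅ := by decide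
lemma C2_eq_img : C2 = C1.image (Sym2.map dbl) := by decide
lemma C1_eq_img : C1 = C2.image (Sym2.map dbl) := by decide
lemma top_adj_mem : ∀ a b : Fin 5, a ≠ b → s(a,b) ∈ C1 ∪ C2 := by decide

lemma fixed_classify (S : Finset (Sym2 (Fin 5))) (hno : ∀ z ∈ S, ¬z.IsDiag)
    (hfix : S.image em5 = S) : S = ∅ ∨ S = C1 ∨ S = C2 ∨ S = C1 ∪ C2 := by
  classical
  have hstep : ∀ z ∈ S, em5 z ∈ S := fun z hz => hfix ▸ Finset.mem_image_of_mem em5 hz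
  have horb : ∀ z ∈ S, ∀ k, em5^[k] z ∈ S := by
    intro z hz k
    induction k with
    | zero => simpa
    | succ k ih => rw [Function.iterate_succ_apply']; exact hstep _ ih
  have lemA : ∀ z ∈ C1, z ∈ S → s((0:Fin 5),(1:Fin 5)) ∈ S := by
    intro z hz hzS
    obtain ⟨k, -, hk⟩ := Finset.mem_image.1 (keyC1 z hz)
    rw [← hk]; exact horb z hzS k
  have lemB : ∀ z ∈ C2, z ∈ S → s((0:Fin 5),(2:Fin 5)) ∈ S := by
    intro z hz hzS
    obtain ⟨k, -, hk⟩ := Finset.mem_image.1 (keyC2 z hz)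
    rw [← hk]; exact horb z hzS k
  have C1sub : s((0:Fin 5),(1:Fin 5)) ∈ S → C1 ⊆ S := by
    intro h z hz
    obtain ⟨k, -, hk⟩ := Finset.mem_image.1 (keyC1' z hz)
    rw [← hk]; exact horb _ h k
  have C2sub : s((0:Fin 5),(2:Fin 5)) ∈ S → C2 ⊆ S := by
    intro h z hz
    obtain ⟨k, -, hk⟩ := Finset.mem_image.1 (keyC2' z hz)
    rw [← hk]; exact horb _ h k
  have hSsub : S ⊆ C1 ∪ C2 := fun z hz => nondiag_mem z (hno z hz)
  by_cases b1 : s((0:Fin 5),(1:Fin 5)) ∈ S <;> by_cases b2 : s((0:Fin 5),(2:Fin 5)) ∈ S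
  · right; right; right
    exact Finset.Subset.antisymm hSsub (Finset.union_subset (C1sub b1) (C2sub b2))
  · right; left
    refine Finset.Subset.antisymm ?_ (C1sub b1)
    intro z hz
    rcases Finset.mem_union.1 (hSsub hz) with h | h
    · exact h
    · exact absurd (lemB z h hz) b2
  · right; right; left
    refine Finset.Subset.antisymm ?_ (C2sub b2)
    intro z hz
    rcases Finset.mem_union.1 (hSsub hz) with h | h
    · exact absurd (lemA z h hz) b1
    · exact h
  · left
    rw [Finset.eq_empty_iff_forall_notMem]
    intro z hz
    rcases Finset.mem_union.1 (hSsub hz) with h | h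
    · exact b1 (lemA z h hz)
    · exact b2 (lemB z h hz)

/-- Every nontrivial monotone graph property on 5 vertices is evasive. -/
theorem stmt_8 (Δ : Set (SimpleGraph (Fin 5)))
    (hiso : ∀ G H : SimpleGraph (Fin 5), G ∈ Δ → Nonempty (G ≃g H) → H ∈ Δ)
    (hmono : ∀ G H : SimpleGraph (Fin 5), G ∈ Δ → H ≤ G → H ∈ Δ)
    (hbot : (⊥ : SimpleGraph (Fin 5)) ∈ Δ)
    (htop : (⊤ : SimpleGraph (Fin 5)) ∉ Δ) :
    ¬ Nonevasive (graphComplex Δ) := by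
  intro hne
  classical
  have hchi : chi (graphComplex Δ) = 0 := chi_eq_zero hne (gc_downClosed hmono)
  set Δ' := graphComplex Δ with hΔ'
  set T : Finset (Finset (Sym2 (Fin 5))) := (Set.toFinite Δ').toFinset with hTdef
  have hmemT : ∀ S, S ∈ T ↔ S ∈ Δ' := fun S => Set.Finite.mem_toFinset _
  set P : Finset (Sym2 (Fin 5)) → Finset (Sym2 (Fin 5)) := fun S => S.image em5 with hPdef
  have hPinj : Function.Injective P := Finset.image_injective em5_inj
  have hP5 : ∀ S, P^[5] S = S := by
    intro S
    show P (P (P (P (P S)))) = S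
    show ((((S.image em5).image em5).image em5).image em5).image em5 = S
    rw [Finset.image_image, Finset.image_image, Finset.image_image, Finset.image_image]
    have hid : S.image (fun z => em5 (em5 (em5 (em5 (em5 z))))) = S := by
      rw [show (fun z => em5 (em5 (em5 (em5 (em5 z))))) = id from funext fun z => em5_five5 z]
      exact Finset.image_id
    exact hid
  have hf : ∀ S, (-1:ℤ)^(P S).card = (-1:ℤ)^S.card := by
    intro S
    rw [show (P S).card = S.card from Finset.card_image_of_injective S em5_inj]
  have hPT : ∀ S ∈ T, P S ∈ T := by
    intro S hS
    rw [hmemT] at hS ⊢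
    exact gc_image_mem hiso rot hS
  -- split the Euler characteristic sum into fixed and non-fixed parts
  have hsplit := Finset.sum_filter_add_sum_filter_not T (fun S => P S = S)
    (fun S => (-1:ℤ)^S.card)
  have hchiT : ∑ σ ∈ T, (-1:ℤ)^σ.card = 0 := hchi
  -- the non-fixed part is divisible by 5
  have hdvd : (5:ℤ) ∣ ∑ x ∈ T.filter (fun S => ¬ P S = S), (-1:ℤ)^x.card := by
    apply sum_orbits_dvd P hPinj hP5 _ hf (T.filter (fun S => ¬ P S = S)).card _ le_rfl
    · intro x hx
      rw [Finset.mem_filter] at hx ⊢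
      refine ⟨hPT x hx.1, ?_⟩
      intro h
      exact hx.2 (hPinj h)
    · intro x hx
      exact (Finset.mem_filter.1 hx).2
  -- analyze the fixed part
  have hbotΔ' : (∅ : Finset (Sym2 (Fin 5))) ∈ Δ' := ⟨⊥, hbot, edgesOf_bot⟩
  have htopΔ' : C1 ∪ C2 ∉ Δ' := by
    rintro ⟨G, hG, hGe⟩
    have hGtop : G = ⊤ := by
      ext a b
      simp only [SimpleGraph.top_adj]
      constructor
      · exact G.ne_of_adj
      · intro hab
        have hmem : s(a,b) ∈ edgesOf G := by rw [hGe]; exact top_adj_mem a b hab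
        exact (G.mem_edgeSet).1 (mem_edgesOf.1 hmem)
    rw [hGtop] at hG
    exact htop hG
  have hC1C2 : C1 ∈ Δ' ↔ C2 ∈ Δ' := by
    constructor
    · intro h
      rw [C2_eq_img]
      exact gc_image_mem hiso dbl h
    · intro h
      rw [C1_eq_img]
      exact gc_image_mem hiso dbl h
  have hclass : ∀ S ∈ T.filter (fun S => P S = S), S = ∅ ∨ S = C1 ∨ S = C2 := by
    intro S hS
    rw [Finset.mem_filter, hmemT] at hS
    obtain ⟨hSΔ', hSfix⟩ := hS
    have hno : ∀ z ∈ S, ¬z.IsDiag := by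
      obtain ⟨G, -, rfl⟩ := hSΔ'
      exact edgesOf_nondiag
    rcases fixed_classify S hno hSfix with h | h | h | h
    · exact Or.inl h
    · exact Or.inr (Or.inl h)
    · exact Or.inr (Or.inr h)
    · exact absurd (h ▸ hSΔ') htopΔ'
  have hemptyfix : (∅ : Finset (Sym2 (Fin 5))) ∈ T.filter (fun S => P S = S) := by
    rw [Finset.mem_filter, hmemT]
    exact ⟨hbotΔ', Finset.image_empty em5⟩
  -- compute the fixed-part sum
  have hfixsum : ∑ x ∈ T.filter (fun S => P S = S), (-1:ℤ)^x.card = 1 ∨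
      ∑ x ∈ T.filter (fun S => P S = S), (-1:ℤ)^x.card = -1 := by
    by_cases hc : C1 ∈ Δ'
    · have hc2 : C2 ∈ Δ' := hC1C2.1 hc
      have hF : T.filter (fun S => P S = S) = {∅, C1, C2} := by
        apply Finset.Subset.antisymm
        · intro S hS
          rcases hclass S hS with h | h | h <;> simp [h]
        · intro S hS
          simp only [Finset.mem_insert, Finset.mem_singleton] at hS
          rw [Finset.mem_filter, hmemT]
          rcases hS with rfl | rfl | rfl
          · exact ⟨hbotΔ', Finset.image_empty em5⟩
          · exact ⟨hc, C1_fixed⟩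
          · exact ⟨hc2, C2_fixed⟩
      right
      rw [hF]
      rw [Finset.sum_insert (by simp [Ne.symm C1_ne_empty, Ne.symm C2_ne_empty]),
        Finset.sum_insert (by simp [C1_ne_C2]), Finset.sum_singleton,
        C1_card, C2_card, Finset.card_empty]
      norm_num
    · have hc2 : C2 ∉ Δ' := fun h => hc (hC1C2.2 h)
      have hF : T.filter (fun S => P S = S) = {∅} := by
        apply Finset.Subset.antisymm
        · intro S hS
          have hSΔ' : S ∈ Δ' := by
            have := (Finset.mem_filter.1 hS).1
            rwa [hmemT] at this
          rcases hclass S hS with h | h | h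
          · simp [h]
          · exact absurd (h ▸ hSΔ') hc
          · exact absurd (h ▸ hSΔ') hc2
        · intro S hS
          rw [Finset.mem_singleton] at hS
          subst hS
          exact hemptyfix
      left
      rw [hF, Finset.sum_singleton, Finset.card_empty]
      norm_num
  -- conclude: 0 = (±1) + (multiple of 5), contradiction
  obtain ⟨k, hk⟩ := hdvd
  rcases hfixsum with h | h <;> rw [h, hk] at hsplit <;> rw [hchiT] at hsplit <;> omega
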